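/- Neyman-Pearson for discrete Gaussians with different means, part 1: fix σ > 0, d ∈ ℕ, x, δ ∈ ℤ^d. Let p_X, p_Y be the pmfs on ℤ^d of the product discrete Gaussians centered at x and x+δ respectively, and let φ : ℤ^d → ℝ be a (possibly randomized) test with 0 ≤ φ(z) ≤ 1 for all z. Suppose S = {z ∈ ℤ^d : ⟨z,δ⟩ ≤ σ²·ln α + ½(‖δ‖₂² + 2⟨x,δ⟩)} for some real α > 0. If ∑_{z∈ℤ^d} φ(z)·p_X(z) ≥ ∑_{z∈S} p_X(z), then ∑_{z∈ℤ^d} φ(z)·p_Y(z) ≥ ∑_{z∈S} p_Y(z). -/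

import Mathlib

open scoped BigOperators

/-- Discrete Gaussian pmf on ℤ with location `μ` and scale `σ`. -/
noncomputable def dgauss (σ : ℝ) (μ : ℤ) (z : ℤ) : ℝ :=
  Real.exp (-((z : ℝ) - (μ : ℝ)) ^ 2 / (2 * σ ^ 2)) /
    ∑' h : ℤ, Real.exp (-((h : ℝ) - (μ : ℝ)) ^ 2 / (2 * σ ^ 2))

/-- Product discrete Gaussian pmf on `ℤ^d` centered at `x`. -/
noncomputable def dgaussProd (σ : ℝ) (d : ℕ) (x z : Fin d → ℤ) : ℝ :=
  ∏ i, dgauss σ (x i) (z i)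

/-- Standard inner product on `ℝ^d` of (casts of) integer vectors. -/
noncomputable def iprod (d : ℕ) (a b : Fin d → ℤ) : ℝ :=
  ∑ i, (a i : ℝ) * (b i : ℝ)

/-- Squared ℓ₂ norm of (the cast of) an integer vector. -/
noncomputable def nsq (d : ℕ) (a : Fin d → ℤ) : ℝ :=
  ∑ i, ((a i : ℝ)) ^ 2

lemma summable_gauss (σ : ℝ) (hσ : 0 < σ) (μ : ℤ) :
    Summable (fun h : ℤ => Real.exp (-((h : ℝ) - (μ : ℝ)) ^ 2 / (2 * σ ^ 2))) := by
  have h0 : Summable (fun h : ℤ => Real.exp (-(h : ℝ) ^ 2 / (2 * σ ^ 2))) := by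
    have key : ∀ n : ℕ, Real.exp (-(n : ℝ) ^ 2 / (2 * σ ^ 2)) ≤
        Real.exp (-(1 / (2 * σ ^ 2))) ^ n := by
      intro n
      rw [← Real.exp_nat_mul]
      apply Real.exp_le_exp.2
      have hn : (n : ℝ) ≤ (n : ℝ) ^ 2 := by
        rcases Nat.eq_zero_or_pos n with h | h
        · simp [h]
        · have : (1:ℝ) ≤ (n:ℝ) := by exact_mod_cast h
          nlinarith
      have hpos : (0:ℝ) < (2 * σ ^ 2)⁻¹ := by positivity
      rw [div_eq_mul_inv, one_div]
      nlinarith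
    have hgeom : Summable (fun n : ℕ => Real.exp (-(1 / (2 * σ ^ 2))) ^ n) :=
      summable_geometric_of_lt_one (Real.exp_pos _).le
        (Real.exp_lt_one_iff.2 (by
          have h2 : (0:ℝ) < 1/(2*σ^2) := by positivity
          linarith))
    have hnat : Summable (fun n : ℕ => Real.exp (-(n : ℝ) ^ 2 / (2 * σ ^ 2))) :=
      Summable.of_nonneg_of_le (fun n => (Real.exp_pos _).le) key hgeom
    apply Summable.of_nat_of_neg <;> simpa using hnat
  rw [← (Equiv.addRight μ).summable_iff]
  convert h0 using 2 with h
  simp [Equiv.coe_addRight]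

lemma norm_pos (σ : ℝ) (hσ : 0 < σ) (μ : ℤ) :
    0 < ∑' h : ℤ, Real.exp (-((h : ℝ) - (μ : ℝ)) ^ 2 / (2 * σ ^ 2)) :=
  Summable.tsum_pos (summable_gauss σ hσ μ) (fun h => (Real.exp_pos _).le) μ (Real.exp_pos _)

lemma norm_shift (σ : ℝ) (μ ν : ℤ) :
    (∑' h : ℤ, Real.exp (-((h : ℝ) - (μ : ℝ)) ^ 2 / (2 * σ ^ 2))) =
    ∑' h : ℤ, Real.exp (-((h : ℝ) - (ν : ℝ)) ^ 2 / (2 * σ ^ 2)) := by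
  rw [← (Equiv.addRight (μ - ν)).tsum_eq
    (fun h : ℤ => Real.exp (-((h : ℝ) - (μ : ℝ)) ^ 2 / (2 * σ ^ 2)))]
  congr 1 with h
  simp only [Equiv.coe_addRight]
  push_cast
  ring_nf

lemma dgauss_nonneg (σ : ℝ) (hσ : 0 < σ) (μ z : ℤ) : 0 ≤ dgauss σ μ z :=
  div_nonneg (Real.exp_pos _).le (norm_pos σ hσ μ).le

lemma dgauss_summable (σ : ℝ) (hσ : 0 < σ) (μ : ℤ) : Summable (dgauss σ μ) :=
  (summable_gauss σ hσ μ).div_const _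

lemma dgauss_ratio (σ : ℝ) (μ δ z : ℤ) :
    dgauss σ (μ + δ) z =
      Real.exp ((2 * ((z:ℝ) - μ) * δ - (δ:ℝ)^2) / (2 * σ ^ 2)) * dgauss σ μ z := by
  unfold dgauss
  rw [← norm_shift σ (μ + δ) μ, ← mul_div_assoc, ← Real.exp_add, ← add_div]
  congr 2
  push_cast
  ring

lemma summable_pi_prod (d : ℕ) (f : Fin d → ℤ → ℝ)
    (hf : ∀ i, Summable (f i)) (hpos : ∀ i z, 0 ≤ f i z) :
    Summable (fun z : Fin d → ℤ => ∏ i, f i (z i)) := by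
  induction d with
  | zero => simp; exact summable_of_finite_support (Set.toFinite _)
  | succ d ih =>
    let consE : (ℤ × (Fin d → ℤ)) ≃ (Fin (d+1) → ℤ) :=
      { toFun := fun p => Fin.cons p.1 p.2
        invFun := fun z => (z 0, fun i => z i.succ)
        left_inv := fun p => by simp
        right_inv := fun z => by
          funext i
          exact Fin.cases rfl (fun j => rfl) i }
    rw [← consE.summable_iff]
    have he : ((fun z : Fin (d+1) → ℤ => ∏ i, f i (z i)) ∘ consE)
        = fun p : ℤ × (Fin d → ℤ) => f 0 p.1 * ∏ i : Fin d, f i.succ (p.2 i) := by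
      funext p
      simp [consE, Fin.prod_univ_succ]
    rw [he]
    have hg : Summable (fun b : Fin d → ℤ => ∏ i : Fin d, f i.succ (b i)) :=
      ih (fun i => f i.succ) (fun i => hf i.succ) (fun i z => hpos i.succ z)
    have hgn : ∀ b : Fin d → ℤ, 0 ≤ ∏ i : Fin d, f i.succ (b i) :=
      fun b => Finset.prod_nonneg fun i _ => hpos i.succ _
    exact Summable.mul_of_nonneg (f := f 0)
      (g := fun b : Fin d → ℤ => ∏ i : Fin d, f i.succ (b i)) (hf 0) hg
      (fun z => hpos 0 z) hgn

/-- Neyman-Pearson for discrete Gaussians with different means, part 1. -/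
theorem neyman_pearson_dgauss_part1 (σ : ℝ) (hσ : 0 < σ) (d : ℕ)
    (x δ : Fin d → ℤ)
    (φ : (Fin d → ℤ) → ℝ) (hφ0 : ∀ z, 0 ≤ φ z) (hφ1 : ∀ z, φ z ≤ 1)
    (α : ℝ) (hα : 0 < α) (S : Set (Fin d → ℤ))
    (hS : S = {z | iprod d z δ ≤
      σ ^ 2 * Real.log α + (1 / 2) * (nsq d δ + 2 * iprod d x δ)})
    (h : ∑' z, φ z * dgaussProd σ d x z ≥ ∑' z : S, dgaussProd σ d x z) :
    ∑' z, φ z * dgaussProd σ d (x + δ) z ≥ ∑' z : S, dgaussProd σ d (x + δ) z := by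
  set pX : (Fin d → ℤ) → ℝ := dgaussProd σ d x with hpX
  set pY : (Fin d → ℤ) → ℝ := dgaussProd σ d (x + δ) with hpY
  set t : (Fin d → ℤ) → ℝ :=
    fun z => (2 * iprod d z δ - 2 * iprod d x δ - nsq d δ) / (2 * σ ^ 2) with ht
  -- nonnegativity
  have hpX0 : ∀ z, 0 ≤ pX z := fun z =>
    Finset.prod_nonneg fun i _ => dgauss_nonneg σ hσ _ _
  have hpY0 : ∀ z, 0 ≤ pY z := fun z =>
    Finset.prod_nonneg fun i _ => dgauss_nonneg σ hσ _ _
  -- summability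
  have hPX : Summable pX :=
    summable_pi_prod d (fun i => dgauss σ (x i)) (fun i => dgauss_summable σ hσ _)
      (fun i z => dgauss_nonneg σ hσ _ _)
  have hPY : Summable pY :=
    summable_pi_prod d (fun i => dgauss σ ((x + δ) i)) (fun i => dgauss_summable σ hσ _)
      (fun i z => dgauss_nonneg σ hσ _ _)
  -- ratio
  have hratio : ∀ z, pY z = Real.exp (t z) * pX z := by
    intro z
    have : pY z = ∏ i, (Real.exp ((2 * ((z i : ℝ) - (x i : ℝ)) * (δ i : ℝ)
        - (δ i : ℝ)^2) / (2 * σ ^ 2)) * dgauss σ (x i) (z i)) := by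
      refine Finset.prod_congr rfl fun i _ => ?_
      rw [Pi.add_apply]
      exact dgauss_ratio σ (x i) (δ i) (z i)
    rw [this, Finset.prod_mul_distrib, ← Real.exp_sum]
    congr 1
    rw [ht]
    rw [← Finset.sum_div]
    congr 1
    simp only [iprod, nsq, Finset.mul_sum, ← Finset.sum_sub_distrib]
    congr 1
    refine Finset.sum_congr rfl fun i _ => ?_
    ring
  -- membership characterization
  have hmem : ∀ z, z ∈ S ↔ Real.exp (t z) ≤ α := by
    intro z
    rw [hS]
    simp only [Set.mem_setOf_eq]
    rw [← Real.exp_log hα, Real.exp_le_exp, Real.exp_log hα, ht]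
    rw [div_le_iff₀ (by positivity : (0:ℝ) < 2 * σ ^ 2)]
    constructor <;> intro hh <;> nlinarith
  -- the test minus indicator
  set ψ : (Fin d → ℤ) → ℝ := fun z => φ z - S.indicator 1 z with hψ
  have key : ∀ z, 0 ≤ ψ z * (pY z - α * pX z) := by
    intro z
    by_cases hz : z ∈ S
    · have h1 : ψ z ≤ 0 := by
        simp [hψ, Set.indicator_of_mem hz]
        exact hφ1 z
      have h2 : pY z - α * pX z ≤ 0 := by
        rw [hratio z]
        have := (hmem z).1 hz
        nlinarith [hpX0 z]
      have := mul_nonneg (neg_nonneg.2 h1) (neg_nonneg.2 h2)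
      nlinarith
    · have h1 : 0 ≤ ψ z := by
        simp [hψ, Set.indicator_of_notMem hz]
        exact hφ0 z
      have h2 : 0 ≤ pY z - α * pX z := by
        rw [hratio z]
        have : α ≤ Real.exp (t z) := le_of_not_ge fun hc => hz ((hmem z).2 hc)
        nlinarith [hpX0 z]
      exact mul_nonneg h1 h2
  -- summabilities of the pieces
  have hφX : Summable (fun z => φ z * pX z) :=
    Summable.of_nonneg_of_le (fun z => mul_nonneg (hφ0 z) (hpX0 z))
      (fun z => mul_le_of_le_one_left (hpX0 z) (hφ1 z)) hPX
  have hφY : Summable (fun z => φ z * pY z) :=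
    Summable.of_nonneg_of_le (fun z => mul_nonneg (hφ0 z) (hpY0 z))
      (fun z => mul_le_of_le_one_left (hpY0 z) (hφ1 z)) hPY
  have hiX : Summable (S.indicator pX) := hPX.indicator S
  have hiY : Summable (S.indicator pY) := hPY.indicator S
  -- pointwise identity
  have hpw : ∀ z, ψ z * (pY z - α * pX z) =
      (φ z * pY z - S.indicator pY z) - α * (φ z * pX z - S.indicator pX z) := by
    intro z
    by_cases hz : z ∈ S
    · simp only [hψ, Set.indicator_of_mem hz, Pi.one_apply]
      ring
    · simp only [hψ, Set.indicator_of_notMem hz]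
      ring
  -- sum the inequality
  have hsum : 0 ≤ ∑' z, ((φ z * pY z - S.indicator pY z)
      - α * (φ z * pX z - S.indicator pX z)) := by
    rw [← tsum_congr hpw]
    exact tsum_nonneg key
  have hsplit : (∑' z, ((φ z * pY z - S.indicator pY z)
      - α * (φ z * pX z - S.indicator pX z)))
      = ((∑' z, φ z * pY z) - ∑' z, S.indicator pY z)
        - α * ((∑' z, φ z * pX z) - ∑' z, S.indicator pX z) := by
    rw [Summable.tsum_sub (hφY.sub hiY) (((hφX.sub hiX)).mul_left α),
      Summable.tsum_sub hφY hiY, tsum_mul_left, Summable.tsum_sub hφX hiX]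
  rw [hsplit] at hsum
  have hsubX : (∑' z : S, pX z) = ∑' z, S.indicator pX z := tsum_subtype S pX
  have hsubY : (∑' z : S, pY z) = ∑' z, S.indicator pY z := tsum_subtype S pY
  have hX : 0 ≤ (∑' z, φ z * pX z) - ∑' z, S.indicator pX z := by
    rw [← hsubX]
    exact sub_nonneg.2 h
  rw [ge_iff_le, hsubY, ← sub_nonneg]
  nlinarith
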